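/- For an external address s define t_s* := sup_{k ≥ 1} F^{−k}(2π|s_{k+1}|) ∈ [0,∞], where F^{−1}(t) = log(1+t) is the inverse of F and F^{−k} denotes its k-th iterate. Then t_s < ∞ if and only if t_s* < ∞, and in that case t_s* ≤ t_s ≤ t_s* + 1. -/

import Mathlib

open Filter Topology ENNReal

noncomputable section

/-- The space of external addresses: integer sequences (indexed from 0, so index `k`
corresponds to the entry `s_{k+1}` of the paper) with the lexicographic order. -/
abbrev Addr : Type := Lex (ℕ → ℤ)

/-- The shift map `σ` on external addresses. -/
def shiftA (s : Addr) : Addr := toLex (fun n => ofLex s (n + 1))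

/-- The model growth function `F(t) = e^t - 1`. -/
def Fexp (t : ℝ) : ℝ := Real.exp t - 1

/-- The model map `𝓕(s,t) = (σ s, F t - 2π |s₂|)`. -/
def Fmod (p : Addr × ℝ) : Addr × ℝ :=
  (shiftA p.1, Fexp p.2 - 2 * Real.pi * |((ofLex p.1 1 : ℤ) : ℝ)|)

/-- The model set `X̄ = {(s,t) : T(𝓕ⁿ(s,t)) ≥ 0 for all n ≥ 0}`. -/
def Xbar : Set (Addr × ℝ) := {p | ∀ n : ℕ, 0 ≤ (Fmod^[n] p).2}

/-- The model escaping set `X = {(s,t) ∈ X̄ : T(𝓕ⁿ(s,t)) → ∞}`. -/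
def Xset : Set (Addr × ℝ) :=
  {p | p ∈ Xbar ∧ Tendsto (fun n : ℕ => (Fmod^[n] p).2) atTop atTop}

/-- The minimal potential `t_s ∈ [0,∞]` of an address (`∞` if `(s,t) ∉ X̄` for all `t ≥ 0`). -/
def tS (s : Addr) : ℝ≥0∞ :=
  sInf (ENNReal.ofReal '' {t : ℝ | 0 ≤ t ∧ (s, t) ∈ Xbar})

/-- The exponential map `E_κ(z) = e^z + κ`. -/
def Eexp (κ : ℂ) (z : ℂ) : ℂ := Complex.exp z + κ

/-- The escaping set `I(E_κ)`. -/
def escapingSet (κ : ℂ) : Set ℂ :=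
  {z | Tendsto (fun n : ℕ => ‖(Eexp κ)^[n] z‖) atTop atTop}

/-- The order topology induced by the lexicographic order on external addresses. -/
instance : TopologicalSpace Addr := Preorder.topology Addr
instance : OrderTopology Addr := ⟨rfl⟩

/-- The inverse `F⁻¹(t) = log(1+t)` of the model growth function. -/
def Finv (t : ℝ) : ℝ := Real.log (1 + t)

/-- `t_s* = sup_{k ≥ 1} F^{-k}(2π |s_{k+1}|)`; with our 0-based indexing the paper's entry
`s_{k+1}` (for `k ≥ 1`) is `ofLex s k`, so we take the supremum over `k = m + 1`, `m : ℕ`. -/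
def tSstar (s : Addr) : ℝ≥0∞ :=
  ⨆ m : ℕ, ENNReal.ofReal (Finv^[m + 1] (2 * Real.pi * |((ofLex s (m + 1) : ℤ) : ℝ)|))

lemma a_nonneg (s : Addr) (k : ℕ) : 0 ≤ 2 * Real.pi * |((ofLex s k : ℤ) : ℝ)| :=
  mul_nonneg (by positivity) (abs_nonneg _)

lemma finv_nonneg {x : ℝ} (hx : 0 ≤ x) : 0 ≤ Finv x := Real.log_nonneg (by linarith)

lemma finv_iter_nonneg (k : ℕ) {x : ℝ} (hx : 0 ≤ x) : 0 ≤ Finv^[k] x := by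
  induction k generalizing x with
  | zero => simpa
  | succ k ih => rw [Function.iterate_succ_apply]; exact ih (finv_nonneg hx)

lemma exp_finv {x : ℝ} (hx : 0 ≤ x) : Real.exp (Finv x) = 1 + x := by
  unfold Finv; rw [Real.exp_log (by linarith)]

lemma le_of_fexp_ge {t x : ℝ} (hx : 0 ≤ x) (h : x ≤ Fexp t) : Finv x ≤ t := by
  unfold Finv; unfold Fexp at h
  calc Real.log (1 + x) ≤ Real.log (Real.exp t) := by
        apply Real.log_le_log (by linarith); linarith
    _ = t := Real.log_exp t

lemma ofLex_shiftA (s : Addr) (k : ℕ) : ofLex (shiftA s) k = ofLex s (k + 1) := rfl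

lemma mem_Xbar_step {s : Addr} {t : ℝ} (h : (s, t) ∈ Xbar) : Fmod (s, t) ∈ Xbar := by
  intro n
  have := h (n + 1)
  rwa [Function.iterate_succ_apply] at this

lemma lower_bound : ∀ (k : ℕ) (s : Addr) (t : ℝ), (s, t) ∈ Xbar →
    Finv^[k + 1] (2 * Real.pi * |((ofLex s (k + 1) : ℤ) : ℝ)|) ≤ t := by
  intro k
  induction k with
  | zero =>
    intro s t h
    have h1 := h 1
    simp only [Function.iterate_one, Fmod] at h1
    exact le_of_fexp_ge (a_nonneg s 1) (by linarith)
  | succ k ih =>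
    intro s t h
    have h1 := h 1
    simp only [Function.iterate_one, Fmod] at h1
    have hstep := ih (shiftA s) (Fexp t - 2 * Real.pi * |((ofLex s 1 : ℤ) : ℝ)|)
      (mem_Xbar_step h)
    rw [ofLex_shiftA] at hstep
    have hc : 0 ≤ Finv^[k + 1] (2 * Real.pi * |((ofLex s (k + 1 + 1) : ℤ) : ℝ)|) :=
      finv_iter_nonneg _ (a_nonneg s _)
    have := le_of_fexp_ge hc (by linarith [a_nonneg s 1])
    rw [Function.iterate_succ_apply']
    exact this

def Good (s : Addr) (t : ℝ) : Prop :=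
  ∀ k : ℕ, Finv^[k + 1] (2 * Real.pi * |((ofLex s (k + 1) : ℤ) : ℝ)|) + 1 ≤ t

lemma good_step {s : Addr} {t : ℝ} (h : Good s t) :
    Good (shiftA s) (Fexp t - 2 * Real.pi * |((ofLex s 1 : ℤ) : ℝ)|) := by
  intro k
  rw [ofLex_shiftA]
  set a1 := 2 * Real.pi * |((ofLex s 1 : ℤ) : ℝ)| with ha1def
  set c := Finv^[k + 1] (2 * Real.pi * |((ofLex s (k + 1 + 1) : ℤ) : ℝ)|) with hcdef
  have hc : 0 ≤ c := finv_iter_nonneg _ (a_nonneg s _)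
  have ha1 : 0 ≤ a1 := a_nonneg s 1
  have h0 := h 0
  have hk := h (k + 1)
  rw [Function.iterate_succ_apply', ← hcdef] at hk
  simp only [zero_add, Function.iterate_one, ← ha1def] at h0
  -- from monotonicity of exp:
  have hm1 : Real.exp (Finv c + 1) ≤ Real.exp t := Real.exp_le_exp.mpr (by linarith)
  have hm2 : Real.exp (Finv a1 + 1) ≤ Real.exp t := Real.exp_le_exp.mpr (by linarith)
  rw [Real.exp_add, exp_finv hc] at hm1
  rw [Real.exp_add, exp_finv ha1] at hm2
  have he : (2 : ℝ) ≤ Real.exp 1 := by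
    have := Real.add_one_le_exp 1; linarith
  have : c + a1 + 1 ≤ Fexp t := by
    unfold Fexp
    nlinarith
  linarith

lemma good_mem : ∀ (n : ℕ) (s : Addr) (t : ℝ), Good s t → 0 ≤ (Fmod^[n] (s, t)).2 := by
  intro n
  induction n with
  | zero =>
    intro s t h
    have := h 0
    have h0 : 0 ≤ Finv^[0 + 1] (2 * Real.pi * |((ofLex s (0 + 1) : ℤ) : ℝ)|) :=
      finv_iter_nonneg _ (a_nonneg s _)
    simpa using by linarith
  | succ n ih =>
    intro s t h
    rw [Function.iterate_succ_apply]
    exact ih _ _ (good_step h)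

/-- **Growth of escaping endpoints**: `s` is exponentially bounded (`t_s < ∞`) iff
`t_s* < ∞`, in which case `t_s* ≤ t_s ≤ t_s* + 1`. -/
theorem tS_vs_tSstar (s : Addr) :
    (tS s ≠ ⊤ ↔ tSstar s ≠ ⊤) ∧
    (tS s ≠ ⊤ → tSstar s ≤ tS s ∧ tS s ≤ tSstar s + 1) := by

  have hlow : tSstar s ≤ tS s := by
    apply le_sInf
    rintro b ⟨t, ⟨ht0, htX⟩, rfl⟩
    exact iSup_le fun m => ENNReal.ofReal_le_ofReal (lower_bound m s t htX)
  have hup : tSstar s ≠ ⊤ → tS s ≤ tSstar s + 1 := by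
    intro hne
    set T := (tSstar s).toReal with hT
    have hT0 : 0 ≤ T := ENNReal.toReal_nonneg
    have hbound : ∀ m : ℕ,
        Finv^[m + 1] (2 * Real.pi * |((ofLex s (m + 1) : ℤ) : ℝ)|) ≤ T := by
      intro m
      have h1 : ENNReal.ofReal (Finv^[m + 1] (2 * Real.pi * |((ofLex s (m + 1) : ℤ) : ℝ)|))
          ≤ tSstar s := le_iSup (fun m : ℕ =>
            ENNReal.ofReal (Finv^[m + 1] (2 * Real.pi * |((ofLex s (m + 1) : ℤ) : ℝ)|))) m
      exact (ENNReal.ofReal_le_iff_le_toReal hne).mp h1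
    have hgood : Good s (T + 1) := fun k => by linarith [hbound k]
    have hmem : ENNReal.ofReal (T + 1) ∈
        ENNReal.ofReal '' {t : ℝ | 0 ≤ t ∧ (s, t) ∈ Xbar} :=
      ⟨T + 1, ⟨by linarith, fun n => good_mem n s (T + 1) hgood⟩, rfl⟩
    calc tS s ≤ ENNReal.ofReal (T + 1) := sInf_le hmem
      _ = tSstar s + 1 := by
        rw [ENNReal.ofReal_add hT0 zero_le_one, ENNReal.ofReal_one,
          ENNReal.ofReal_toReal hne]
  constructor
  · constructor
    · intro h
      exact ne_top_of_le_ne_top h hlow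
    · intro h
      intro htop
      have h1 := hup h
      rw [htop, top_le_iff] at h1
      exact (ENNReal.add_ne_top.mpr ⟨h, ENNReal.one_ne_top⟩) h1
  · intro h
    exact ⟨hlow, hup (ne_top_of_le_ne_top h hlow)⟩
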